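/- arXiv:2405.08232 — 2 statements merged into one kernel-verified Lean document; each statement's English description precedes it below -/
import Mathlib

section
/- For fixed energy e (ē_lower = ē_upper = e), the flexibility set {u ∈ ℝ^T : 0 ≤ u_t ≤ m ∀t, ∑_t u_t = e} equals the permutahedron Π(v(e)), the convex hull of all permutations of the fastest-charging profile v(e). -/
open Finset

/-- Fastest-charging profile: `m` for the first `⌊e/m⌋` coordinates,
`e - m⌊e/m⌋` in the next, `0` thereafter (0-based indexing). -/
noncomputable def vProf (T : ℕ) (m e : ℝ) : Fin T → ℝ :=
  fun t => if ((t : ℕ) : ℤ) < ⌊e / m⌋ then m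
    else if ((t : ℕ) : ℤ) = ⌊e / m⌋ then e - m * (⌊e / m⌋ : ℝ)
    else 0

/-- Partial sum of the first `s` coordinates of `x : Fin T → ℝ`. -/
noncomputable def pSum {T : ℕ} (x : Fin T → ℝ) (s : ℕ) : ℝ :=
  ∑ t : Fin T, if (t : ℕ) < s then x t else 0

/-- Permutahedron of `x`: convex hull of all coordinate permutations of `x`. -/
noncomputable def permSet {T : ℕ} (x : Fin T → ℝ) : Set (Fin T → ℝ) :=
  convexHull ℝ {y | ∃ π : Equiv.Perm (Fin T), y = x ∘ π}

section Aux

variable {T : ℕ} {m e : ℝ}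

lemma card_filter_lt_fin (T k : ℕ) (hk : k ≤ T) :
    (Finset.univ.filter fun t : Fin T => (t : ℕ) < k).card = k := by
  rcases eq_or_lt_of_le hk with rfl | hkT
  · rw [Finset.filter_true_of_mem fun t _ => t.isLt, Finset.card_univ, Fintype.card_fin]
  · have : (Finset.univ.filter fun t : Fin T => (t : ℕ) < k) = Finset.Iio (⟨k, hkT⟩ : Fin T) := by
      ext t; simp [Fin.lt_def]
    rw [this, Fin.card_Iio]

lemma rfrac_nonneg (hm : 0 < m) : 0 ≤ e - m * (⌊e / m⌋ : ℝ) := by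
  have := Int.sub_floor_div_mul_nonneg e hm
  linarith [this]

lemma rfrac_lt (hm : 0 < m) : e - m * (⌊e / m⌋ : ℝ) < m := by
  have := Int.sub_floor_div_mul_lt e hm
  linarith [this]

lemma vProf_nonneg (hm : 0 < m) (t : Fin T) : 0 ≤ vProf T m e t := by
  unfold vProf
  split_ifs with h1 h2
  · exact hm.le
  · exact rfrac_nonneg hm
  · exact le_refl _

lemma vProf_le (hm : 0 < m) (t : Fin T) : vProf T m e t ≤ m := by
  unfold vProf
  split_ifs with h1 h2
  · exact le_refl _
  · exact (rfrac_lt hm).le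
  · exact hm.le

lemma floor_nn (hm : 0 < m) (he0 : 0 ≤ e) : 0 ≤ ⌊e / m⌋ :=
  Int.floor_nonneg.2 (div_nonneg he0 hm.le)

lemma kk_le (hm : 0 < m) (heT : e ≤ m * T) : (⌊e / m⌋).toNat ≤ T := by
  have h1 : e / m ≤ (T : ℝ) := (div_le_iff₀ hm).2 (by linarith)
  have h2 : ⌊e / m⌋ ≤ (T : ℤ) := by
    have := Int.floor_le_floor h1
    simpa using this
  omega

lemma vProf_eq_nat (hm : 0 < m) (he0 : 0 ≤ e) (t : Fin T) :
    vProf T m e t = (if (t : ℕ) < (⌊e / m⌋).toNat then m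
      else if (t : ℕ) = (⌊e / m⌋).toNat then e - m * (⌊e / m⌋ : ℝ) else 0) := by
  have h0 := floor_nn hm he0
  unfold vProf
  congr 1
  · simp [Int.lt_toNat]
  · congr 1
    simp only [eq_iff_iff]
    omega

lemma sum_vProf (hm : 0 < m) (he0 : 0 ≤ e) (heT : e ≤ m * T) :
    ∑ t, vProf T m e t = e := by
  have h0 := floor_nn hm he0
  set k := (⌊e / m⌋).toNat with hk
  have hkT : k ≤ T := kk_le hm heT
  have hcast : ((k : ℕ) : ℝ) = ((⌊e / m⌋ : ℤ) : ℝ) := by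
    rw [hk]
    rw [show (((⌊e / m⌋).toNat : ℕ) : ℝ) = (((⌊e / m⌋).toNat : ℤ) : ℝ) by push_cast; ring,
      Int.toNat_of_nonneg h0]
  set r := e - m * (⌊e / m⌋ : ℝ) with hr
  have step1 : ∑ t, vProf T m e t
      = ∑ t : Fin T, (if (t : ℕ) < k then m else if (t : ℕ) = k then r else 0) :=
    Finset.sum_congr rfl fun t _ => vProf_eq_nat hm he0 t
  rw [step1, Fin.sum_univ_eq_sum_range (fun i => if i < k then m else if i = k then r else 0) T]
  have hT : T = k + (T - k) := by omega
  rw [hT, Finset.sum_range_add]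
  have h1 : ∑ i ∈ Finset.range k, (if i < k then m else if i = k then r else 0) = k * m := by
    rw [Finset.sum_congr rfl (fun i hi => if_pos (Finset.mem_range.1 hi))]
    simp [mul_comm]
  have h2 : ∑ i ∈ Finset.range (T - k),
      (if k + i < k then m else if k + i = k then r else 0)
      = ∑ i ∈ Finset.range (T - k), (if i = 0 then r else 0) := by
    refine Finset.sum_congr rfl fun i _ => ?_
    rw [if_neg (by omega)]
    by_cases h : i = 0 <;> simp [h]
  rw [h1, h2]
  have hfl : (m : ℝ) * k ≤ e := by
    have := Int.floor_le (e / m)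
    have h3 : ((k : ℕ) : ℝ) ≤ e / m := by rw [hcast]; exact this
    calc m * k = k * m := mul_comm _ _
      _ ≤ (e / m) * m := by nlinarith
      _ = e := div_mul_cancel₀ e hm.ne'
  by_cases hkT' : k < T
  · rw [Finset.sum_ite_eq' (Finset.range (T - k)) 0 (fun _ => r), if_pos (by simp; omega)]
    rw [hr, ← hcast]; ring
  · have hkT2 : k = T := by omega
    have h4 : ∑ i ∈ Finset.range (T - k), (if i = 0 then r else 0) = 0 := by
      rw [show T - k = 0 by omega]; simp
    rw [h4]
    have h5 : m * T ≤ e := by rw [← hkT2]; exact hfl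
    have h6 : e = m * T := le_antisymm heT h5
    rw [h6, hkT2]; ring

lemma exists_perm_of_list_perm {n : ℕ} {u w : Fin n → ℝ}
    (h : List.Perm (List.ofFn u) (List.ofFn w)) : ∃ π : Equiv.Perm (Fin n), u = w ∘ π := by
  set σ := Tuple.sort u
  set τ := Tuple.sort w
  have hu : Monotone (u ∘ σ) := Tuple.monotone_sort u
  have hw : Monotone (w ∘ τ) := Tuple.monotone_sort w
  have hperm : List.Perm (List.ofFn (u ∘ σ)) (List.ofFn (w ∘ τ)) :=
    ((σ.ofFn_comp_perm u).trans h).trans (τ.ofFn_comp_perm w).symm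
  have heq : u ∘ σ = w ∘ τ :=
    List.ofFn_injective (List.Perm.eq_of_sortedLE hu.sortedLE_ofFn hw.sortedLE_ofFn hperm)
  refine ⟨σ.symm.trans τ, ?_⟩
  funext t
  have := congrFun heq (σ.symm t)
  simpa using this

lemma flex_convex (T : ℕ) (m e : ℝ) :
    Convex ℝ {u : Fin T → ℝ | (∀ t, 0 ≤ u t ∧ u t ≤ m) ∧ ∑ t, u t = e} := by
  rintro x ⟨hx, hxs⟩ y ⟨hy, hys⟩ a b ha hb hab
  constructor
  · intro t
    have h1 := (hx t).1; have h2 := (hx t).2; have h3 := (hy t).1; have h4 := (hy t).2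
    constructor
    · simp only [Pi.add_apply, Pi.smul_apply, smul_eq_mul]
      nlinarith
    · simp only [Pi.add_apply, Pi.smul_apply, smul_eq_mul]
      nlinarith
  · simp only [Pi.add_apply, Pi.smul_apply, smul_eq_mul, Finset.sum_add_distrib,
      ← Finset.mul_sum, hxs, hys, ← add_mul, hab, one_mul]

lemma flex_compact (T : ℕ) (m e : ℝ) :
    IsCompact {u : Fin T → ℝ | (∀ t, 0 ≤ u t ∧ u t ≤ m) ∧ ∑ t, u t = e} := by
  have hset : {u : Fin T → ℝ | (∀ t, 0 ≤ u t ∧ u t ≤ m) ∧ ∑ t, u t = e}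
      = (Set.univ.pi fun _ : Fin T => Set.Icc (0:ℝ) m) ∩ {u | ∑ t, u t = e} := by
    ext u; simp [Set.mem_pi, Set.mem_Icc, forall_and, Pi.le_def]
  rw [hset]
  exact (isCompact_univ_pi fun _ => isCompact_Icc).inter_right
    (isClosed_eq (by continuity) continuous_const)

lemma extreme_almost_integral (hm : 0 < m)
    {u : Fin T → ℝ}
    (hu : u ∈ Set.extremePoints ℝ {u : Fin T → ℝ | (∀ t, 0 ≤ u t ∧ u t ≤ m) ∧ ∑ t, u t = e})
    {s t : Fin T} (hs : 0 < u s ∧ u s < m) (ht : 0 < u t ∧ u t < m) : s = t := by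
  by_contra hst
  obtain ⟨huF, hext⟩ := hu
  set ε := min (min (u s) (m - u s)) (min (u t) (m - u t)) with hε
  have hε0 : 0 < ε := by
    simp only [hε, lt_min_iff]
    exact ⟨⟨hs.1, by linarith [hs.2]⟩, ht.1, by linarith [ht.2]⟩
  have hεs1 : ε ≤ u s := le_trans (min_le_left _ _) (min_le_left _ _)
  have hεs2 : ε ≤ m - u s := le_trans (min_le_left _ _) (min_le_right _ _)
  have hεt1 : ε ≤ u t := le_trans (min_le_right _ _) (min_le_left _ _)
  have hεt2 : ε ≤ m - u t := le_trans (min_le_right _ _) (min_le_right _ _)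
  have mem : ∀ δ : ℝ, δ = ε ∨ δ = -ε →
      (fun r => u r + (if r = s then δ else 0) - (if r = t then δ else 0)) ∈
        {u : Fin T → ℝ | (∀ t, 0 ≤ u t ∧ u t ≤ m) ∧ ∑ t, u t = e} := by
    intro δ hδ
    have hδ1 : |δ| = ε := by rcases hδ with rfl | rfl <;> simp [abs_of_pos hε0, abs_of_neg, hε0]
    constructor
    · intro r
      dsimp only
      rcases eq_or_ne r s with rfl | hrs
      · rw [if_pos rfl, if_neg hst]
        have := abs_le.1 hδ1.le
        constructor <;> [linarith [hs.1, this.1]; linarith [this.2]]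
      · rw [if_neg hrs]
        rcases eq_or_ne r t with rfl | hrt
        · rw [if_pos rfl]
          have := abs_le.1 hδ1.le
          constructor <;> [linarith [ht.1, this.2]; linarith [ht.2, this.1]]
        · rw [if_neg hrt]; simpa using huF.1 r
    · rw [Finset.sum_sub_distrib, Finset.sum_add_distrib, Finset.sum_ite_eq' univ s fun _ => δ,
        Finset.sum_ite_eq' univ t fun _ => δ]
      simp [huF.2]
  have h1 := mem ε (Or.inl rfl)
  have h2 := mem (-ε) (Or.inr rfl)
  have hseg : u ∈ openSegment ℝ
      (fun r => u r + (if r = s then ε else 0) - (if r = t then ε else 0))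
      (fun r => u r + (if r = s then -ε else 0) - (if r = t then -ε else 0)) := by
    refine ⟨1/2, 1/2, by norm_num, by norm_num, by norm_num, ?_⟩
    funext r
    simp only [Pi.add_apply, Pi.smul_apply, smul_eq_mul]
    split_ifs <;> ring
  have := (hext h1 h2 hseg)
  have hcontra := congrFun this s
  simp only [if_pos rfl, if_neg hst] at hcontra
  simp at hcontra
  linarith

open Classical in
/-- three-way decomposition of `univ.val` -/
lemma ms_decomp (T : ℕ) (p q : Fin T → Prop) :
    (Finset.univ.val : Multiset (Fin T)) =
      (Finset.univ.filter p).val +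
      ((Finset.univ.filter fun t => q t ∧ ¬ p t).val +
      (Finset.univ.filter fun t => ¬ q t ∧ ¬ p t).val) := by
  simp only [Finset.filter_val]
  rw [← Multiset.filter_filter, ← Multiset.filter_filter,
    Multiset.filter_add_not q (Multiset.filter (fun t => ¬ p t) Finset.univ.val),
    Multiset.filter_add_not p Finset.univ.val]

lemma map_eq_replicate {α : Type*} (s : Finset α) (f : α → ℝ) (c : ℝ)
    (h : ∀ x ∈ s, f x = c) : Multiset.map f s.val = Multiset.replicate s.card c := by
  rw [Multiset.eq_replicate]
  constructor
  · rw [Multiset.card_map]; rfl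
  · intro b hb
    obtain ⟨x, hx, rfl⟩ := Multiset.mem_map.1 hb
    exact h x hx

lemma floor_eq_of (hm : 0 < m) (c : ℕ) (ρ : ℝ) (he : e = c * m + ρ)
    (h0 : 0 ≤ ρ) (h1 : ρ < m) : ⌊e / m⌋ = (c : ℤ) := by
  rw [Int.floor_eq_iff]
  push_cast
  constructor
  · rw [le_div_iff₀ hm]; nlinarith
  · rw [div_lt_iff₀ hm]; nlinarith

lemma extreme_is_perm (hm : 0 < m) (he0 : 0 ≤ e) (heT : e ≤ m * T)
    {u : Fin T → ℝ}
    (hu : u ∈ Set.extremePoints ℝ {u : Fin T → ℝ | (∀ t, 0 ≤ u t ∧ u t ≤ m) ∧ ∑ t, u t = e}) :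
    ∃ π : Equiv.Perm (Fin T), u = vProf T m e ∘ π := by
  classical
  obtain ⟨hbd, hsum⟩ := hu.1
  set v := vProf T m e with hv
  set A := Finset.univ.filter (fun t : Fin T => u t = m) with hA
  set Z := Finset.univ.filter (fun t : Fin T => u t = 0 ∧ ¬ u t = m) with hZ
  set B := Finset.univ.filter (fun t : Fin T => ¬ u t = 0 ∧ ¬ u t = m) with hB
  have hdecomp : (Finset.univ.val : Multiset (Fin T)) = A.val + (Z.val + B.val) :=
    ms_decomp T _ _
  have hBmem : ∀ t ∈ B, 0 < u t ∧ u t < m := by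
    intro t ht
    simp only [hB, Finset.mem_filter] at ht
    exact ⟨lt_of_le_of_ne (hbd t).1 (Ne.symm ht.2.1), lt_of_le_of_ne (hbd t).2 ht.2.2⟩
  have hBcard : B.card ≤ 1 :=
    Finset.card_le_one.2 fun a ha b hb =>
      extreme_almost_integral hm hu (hBmem a ha) (hBmem b hb)
  have hcardsum : T = A.card + (Z.card + B.card) := by
    have := congrArg Multiset.card hdecomp
    simpa [Finset.card_univ] using this
  -- sum over classes
  have hsumsplit : e = A.card * m + ∑ t ∈ B, u t := by
    have h1 : (∑ t, u t) = ∑ t ∈ A, u t + (∑ t ∈ Z, u t + ∑ t ∈ B, u t) := by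
      rw [Finset.sum, Finset.sum, Finset.sum, Finset.sum, hdecomp]
      simp [Multiset.map_add, Multiset.sum_add]
    have h2 : ∑ t ∈ A, u t = A.card * m := by
      rw [Finset.sum_congr rfl (fun t ht => (Finset.mem_filter.1 ht).2)]
      simp [mul_comm]
      exact Or.inl rfl
    have h3 : ∑ t ∈ Z, u t = 0 := by
      rw [Finset.sum_congr rfl (fun t ht => (Finset.mem_filter.1 ht).2.1)]
      simp
    rw [← hsum, h1, h2, h3]; ring
  -- the multiset of values of u
  have hmapA : Multiset.map u A.val = Multiset.replicate A.card m :=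
    map_eq_replicate _ _ _ fun x hx => (Finset.mem_filter.1 hx).2
  have hmapZ : Multiset.map u Z.val = Multiset.replicate Z.card 0 :=
    map_eq_replicate _ _ _ fun x hx => (Finset.mem_filter.1 hx).2.1
  -- classes for v
  have hkT : (⌊e / m⌋).toNat ≤ T := kk_le hm heT
  set k := (⌊e / m⌋).toNat with hk
  set r := e - m * (⌊e / m⌋ : ℝ) with hr
  have hvt : ∀ t : Fin T, v t = (if (t : ℕ) < k then m else if (t : ℕ) = k then r else 0) :=
    fun t => vProf_eq_nat hm he0 t
  have hr0 : 0 ≤ r := rfrac_nonneg hm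
  have hrm : r < m := rfrac_lt hm
  set A' := Finset.univ.filter (fun t : Fin T => v t = m) with hA'
  set Z' := Finset.univ.filter (fun t : Fin T => v t = 0 ∧ ¬ v t = m) with hZ'
  set B' := Finset.univ.filter (fun t : Fin T => ¬ v t = 0 ∧ ¬ v t = m) with hB'
  have hdecomp' : (Finset.univ.val : Multiset (Fin T)) = A'.val + (Z'.val + B'.val) :=
    ms_decomp T _ _
  have hA'eq : A' = Finset.univ.filter (fun t : Fin T => (t : ℕ) < k) := by
    ext t
    simp only [hA', Finset.mem_filter, Finset.mem_univ, true_and, hvt t]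
    split_ifs with h1 h2
    · simp [h1]
    · simp only [h1, iff_false]; intro h; exact absurd h hrm.ne
    · simp only [h1, iff_false]; intro h; exact absurd h.symm hm.ne'
  have hcardA' : A'.card = k := by rw [hA'eq]; exact card_filter_lt_fin T k hkT
  have hmapA' : Multiset.map v A'.val = Multiset.replicate A'.card m :=
    map_eq_replicate _ _ _ fun x hx => (Finset.mem_filter.1 hx).2
  have hmapZ' : Multiset.map v Z'.val = Multiset.replicate Z'.card 0 :=
    map_eq_replicate _ _ _ fun x hx => (Finset.mem_filter.1 hx).2.1
  have hcardsum' : T = A'.card + (Z'.card + B'.card) := by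
    have := congrArg Multiset.card hdecomp'
    simpa [Finset.card_univ] using this
  -- B' description
  have hB'mem : ∀ t : Fin T, t ∈ B' ↔ ((t : ℕ) = k ∧ r ≠ 0) := by
    intro t
    simp only [hB', Finset.mem_filter, Finset.mem_univ, true_and, hvt t]
    split_ifs with h1 h2
    · constructor
      · rintro ⟨-, hmm⟩; exact absurd rfl hmm
      · rintro ⟨hk', -⟩; omega
    · constructor
      · rintro ⟨hrne, -⟩; exact ⟨h2, hrne⟩
      · rintro ⟨-, hrne⟩; exact ⟨hrne, fun h => absurd h hrm.ne⟩
    · constructor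
      · rintro ⟨hne, -⟩; exact absurd rfl hne
      · rintro ⟨hk', -⟩; omega
  -- case analysis on B
  have key : Multiset.map u Finset.univ.val = Multiset.map v Finset.univ.val := by
    rcases Finset.eq_empty_or_nonempty B with hBe | hBne
    · -- no fractional coordinate: e = A.card * m, r = 0
      have hsum0 : e = A.card * m + 0 := by simpa [hBe] using hsumsplit
      have hfl : ⌊e / m⌋ = (A.card : ℤ) :=
        floor_eq_of hm A.card 0 (by linarith) le_rfl hm
      have hkA : k = A.card := by rw [hk, hfl]; exact Int.toNat_natCast _
      have hre : r = 0 := by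
        rw [hr, hfl]; push_cast; linarith
      have hB'e : B' = ∅ := by
        rw [Finset.eq_empty_iff_forall_notMem]
        intro t ht
        exact absurd hre ((hB'mem t).1 ht).2
      have hzz : Z.card = Z'.card := by
        rw [hBe] at hcardsum; rw [hB'e] at hcardsum'
        simp at hcardsum hcardsum'
        omega
      conv_lhs => rw [hdecomp]
      conv_rhs => rw [hdecomp']
      simp only [Multiset.map_add]
      rw [hmapA, hmapZ, hmapA', hmapZ', hBe, hB'e]
      simp [hcardA', hkA, hzz]
    · -- one fractional coordinate b
      obtain ⟨b, hb⟩ := hBne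
      have hBsing : B = {b} := by
        apply Finset.eq_singleton_iff_unique_mem.2
        exact ⟨hb, fun x hx => extreme_almost_integral hm hu (hBmem x hx) (hBmem b hb)⟩
      have hub := hBmem b hb
      have hsum1 : e = A.card * m + u b := by
        rw [hsumsplit, hBsing, Finset.sum_singleton]
      have hfl : ⌊e / m⌋ = (A.card : ℤ) :=
        floor_eq_of hm A.card (u b) hsum1 hub.1.le hub.2
      have hkA : k = A.card := by rw [hk, hfl]; exact Int.toNat_natCast _
      have hre : r = u b := by
        rw [hr, hfl]; push_cast; linarith [hsum1]
      have hrne : r ≠ 0 := by rw [hre]; exact hub.1.ne'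
      have hkltT : k < T := by
        by_contra h
        have hkT2 : k = T := by omega
        -- then A = univ, but b ∉ A
        have : A.card = T := by omega
        have hAuniv : A = Finset.univ := Finset.eq_univ_of_card _ (by simp [this])
        have : b ∈ A := hAuniv ▸ Finset.mem_univ b
        simp only [hA, Finset.mem_filter] at this
        exact (Finset.mem_filter.1 (hBsing ▸ Finset.mem_singleton_self b : b ∈ B)).2.2 this.2
      have hB'sing : B' = {(⟨k, hkltT⟩ : Fin T)} := by
        ext t
        rw [hB'mem t, Finset.mem_singleton]
        constructor
        · rintro ⟨h1, -⟩; exact Fin.ext h1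
        · rintro rfl; exact ⟨rfl, hrne⟩
      have hmapB : Multiset.map u B.val = Multiset.replicate 1 r := by
        rw [hBsing]; simp [hre]
      have hmapB' : Multiset.map v B'.val = Multiset.replicate 1 r := by
        rw [hB'sing]
        simp only [Finset.singleton_val, Multiset.map_singleton]
        rw [hvt ⟨k, hkltT⟩]
        simp
      have hzz : Z.card = Z'.card := by
        rw [hBsing] at hcardsum; rw [hB'sing] at hcardsum'
        simp at hcardsum hcardsum'
        omega
      conv_lhs => rw [hdecomp]
      conv_rhs => rw [hdecomp']
      simp only [Multiset.map_add]
      rw [hmapA, hmapZ, hmapA', hmapZ', hmapB, hmapB']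
      simp [hcardA', hkA, hzz]
  -- conclude
  have hlist : List.Perm (List.ofFn u) (List.ofFn v) := by
    rw [← Multiset.coe_eq_coe, ← Fin.univ_val_map, ← Fin.univ_val_map]
    exact key
  exact exists_perm_of_list_perm hlist

end Aux

theorem fixedEnergy_flexSet_eq_permSet (T : ℕ) (m e : ℝ) (hm : 0 < m)
    (he0 : 0 ≤ e) (heT : e ≤ m * T) :
    {u : Fin T → ℝ | (∀ t, 0 ≤ u t ∧ u t ≤ m) ∧ ∑ t, u t = e} =
      permSet (vProf T m e) := by
  set F := {u : Fin T → ℝ | (∀ t, 0 ≤ u t ∧ u t ≤ m) ∧ ∑ t, u t = e} with hF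
  have hperms_sub : {y | ∃ π : Equiv.Perm (Fin T), y = vProf T m e ∘ π} ⊆ F := by
    rintro y ⟨π, rfl⟩
    refine ⟨fun t => ⟨vProf_nonneg hm _, vProf_le hm _⟩, ?_⟩
    rw [show ∑ t, (vProf T m e ∘ π) t = ∑ t, vProf T m e (π t) from rfl,
      Equiv.sum_comp π (vProf T m e)]
    exact sum_vProf hm he0 heT
  have hfin : {y | ∃ π : Equiv.Perm (Fin T), y = vProf T m e ∘ π}.Finite := by
    have : {y | ∃ π : Equiv.Perm (Fin T), y = vProf T m e ∘ π} =
        Set.range fun π : Equiv.Perm (Fin T) => vProf T m e ∘ π := by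
      ext y; simp [Set.range, eq_comm]
    rw [this]; exact Set.finite_range _
  apply Set.Subset.antisymm
  · have h1 : closure (convexHull ℝ (Set.extremePoints ℝ F)) = F :=
      closure_convexHull_extremePoints (flex_compact T m e) (flex_convex T m e)
    have h2 : Set.extremePoints ℝ F ⊆ {y | ∃ π : Equiv.Perm (Fin T), y = vProf T m e ∘ π} :=
      fun u hu => extreme_is_perm hm he0 heT hu
    have h3 : closure (convexHull ℝ (Set.extremePoints ℝ F)) ⊆ permSet (vProf T m e) := by
      have hclosed : IsClosed (permSet (vProf T m e)) :=
        (hfin.isCompact_convexHull ℝ).isClosed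
      exact closure_minimal (convexHull_mono h2) hclosed
    rw [h1] at h3; exact h3
  · exact convexHull_min hperms_sub (flex_convex T m e)
end

section
/- The Minkowski sum of the fixed-energy flexibility sets of N EVs with energies e_1,...,e_N (each with power rating m) equals the permutahedron Π(∑_{i=1}^N v(e_i)). -/
open Finset

section basics
variable {T : ℕ} {m e : ℝ}

lemma floor_facts (hm : 0 < m) (he0 : 0 ≤ e) :
    0 ≤ ⌊e / m⌋ ∧ m * (⌊e / m⌋ : ℝ) ≤ e ∧ e < m * ((⌊e / m⌋ : ℝ) + 1) := by
  have h0 : (0:ℝ) ≤ e / m := div_nonneg he0 hm.le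
  refine ⟨Int.floor_nonneg.2 h0, ?_, ?_⟩
  · have := Int.floor_le (e / m)
    calc m * (⌊e / m⌋ : ℝ) ≤ m * (e / m) := by nlinarith
    _ = e := by field_simp
  · have := Int.lt_floor_add_one (e / m)
    have h2 : e / m * m < ((⌊e / m⌋ : ℝ) + 1) * m := by nlinarith
    rw [div_mul_cancel₀ _ hm.ne'] at h2
    linarith

lemma vProf_mem (hm : 0 < m) (he0 : 0 ≤ e) (t : Fin T) :
    0 ≤ vProf T m e t ∧ vProf T m e t ≤ m := by
  obtain ⟨h0, h1, h2⟩ := floor_facts hm he0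
  unfold vProf
  split_ifs with ha hb
  · exact ⟨hm.le, le_refl m⟩
  · constructor <;> nlinarith
  · exact ⟨le_refl 0, hm.le⟩

lemma pSum_zero (x : Fin T → ℝ) : pSum x 0 = 0 := by simp [pSum]

lemma pSum_succ (x : Fin T → ℝ) {k : ℕ} (hk : k < T) :
    pSum x (k + 1) = pSum x k + x ⟨k, hk⟩ := by
  classical
  unfold pSum
  have : ∀ t : Fin T, (if (t : ℕ) < k + 1 then x t else 0)
      = (if (t : ℕ) < k then x t else 0) + (if t = ⟨k, hk⟩ then x t else 0) := by
    intro t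
    rcases lt_trichotomy (t : ℕ) k with h | h | h
    · rw [if_pos (by omega), if_pos h, if_neg (by intro he; subst he; simp at h), add_zero]
    · rw [if_pos (by omega), if_neg (by omega), if_pos (by ext; simp [h]), zero_add]
    · rw [if_neg (by omega), if_neg (by omega), if_neg (by intro he; subst he; simp at h), add_zero]
  rw [Finset.sum_congr rfl (fun t _ => this t), Finset.sum_add_distrib,
    Finset.sum_ite_eq' Finset.univ (⟨k, hk⟩ : Fin T) x, if_pos (Finset.mem_univ _)]

lemma pSum_vProf (hm : 0 < m) (he0 : 0 ≤ e) (heT : e ≤ m * T) {k : ℕ} (hk : k ≤ T) :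
    pSum (vProf T m e) k = min (m * k) e := by
  obtain ⟨h0, h1, h2⟩ := floor_facts hm he0
  induction k with
  | zero => simp [pSum_zero, he0]
  | succ k ih =>
    have hkT : k < T := hk
    rw [pSum_succ _ hkT, ih (le_of_lt hkT)]
    have hval : vProf T m e ⟨k, hkT⟩ = if ((k:ℕ) : ℤ) < ⌊e / m⌋ then m
        else if ((k:ℕ) : ℤ) = ⌊e / m⌋ then e - m * (⌊e / m⌋ : ℝ) else 0 := rfl
    rcases lt_trichotomy ((k : ℤ)) ⌊e / m⌋ with hc | hc | hc
    · rw [hval, if_pos hc]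
      have hk1 : ((k:ℝ) + 1) ≤ (⌊e / m⌋ : ℝ) := by exact_mod_cast hc
      have : m * (k + 1) ≤ e := by nlinarith
      have hmk : m * k ≤ e := by nlinarith
      rw [min_eq_left hmk, min_eq_left (by push_cast; linarith)]
      push_cast; ring
    · rw [hval, if_neg (by omega), if_pos hc]
      have hkr : ((k:ℝ)) = (⌊e / m⌋ : ℝ) := by exact_mod_cast hc
      have hmk : m * k ≤ e := by rw [hkr]; linarith
      have : e ≤ m * ((k:ℝ) + 1) := by rw [hkr]; linarith
      rw [min_eq_left hmk, min_eq_right (by push_cast; linarith)]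
      rw [hkr]; ring
    · rw [hval, if_neg (by omega), if_neg (by omega)]
      have hk1 : (⌊e / m⌋ : ℝ) + 1 ≤ (k:ℝ) := by exact_mod_cast hc
      have hek : e ≤ m * k := by nlinarith
      rw [min_eq_right hek, min_eq_right (by push_cast; nlinarith)]
      ring

lemma pSum_top (x : Fin T → ℝ) : pSum x T = ∑ t, x t := by
  unfold pSum
  exact Finset.sum_congr rfl (fun t _ => if_pos t.isLt)

lemma pSum_sum {T N : ℕ} (x : Fin N → Fin T → ℝ) (k : ℕ) :
    pSum (∑ i, x i) k = ∑ i, pSum (x i) k := by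
  unfold pSum
  rw [Finset.sum_comm]
  refine Finset.sum_congr rfl (fun t _ => ?_)
  by_cases h : (t : ℕ) < k
  · simp [h, Finset.sum_apply]
  · simp [h]

lemma subset_le {T : ℕ} {m ei : ℝ} {u : Fin T → ℝ} (hu : ∀ t, 0 ≤ u t ∧ u t ≤ m)
    (husum : ∑ t, u t = ei) (S : Finset (Fin T)) :
    ∑ t ∈ S, u t ≤ min (m * S.card) ei := by
  refine le_min ?_ ?_
  · have h1 : ∑ t ∈ S, u t ≤ S.card • m :=
      Finset.sum_le_card_nsmul S u m (fun t _ => (hu t).2)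
    rw [nsmul_eq_mul] at h1
    linarith [h1]
  · rw [← husum]
    exact Finset.sum_le_sum_of_subset_of_nonneg (Finset.subset_univ S)
      (fun t _ _ => (hu t).1)

end basics


lemma card_filter_lt {T k : ℕ} (hk : k ≤ T) :
    ((Finset.univ : Finset (Fin T)).filter (fun s : Fin T => (s : ℕ) < k)).card = k := by
  classical
  refine Finset.card_eq_of_bijective (fun i hi => (⟨i, lt_of_lt_of_le hi hk⟩ : Fin T)) ?_ ?_ ?_
  · intro a ha
    simp only [Finset.mem_filter] at ha
    exact ⟨a, ha.2, rfl⟩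
  · intro i hi
    simp only [Finset.mem_filter, Finset.mem_univ, true_and]
    exact hi
  · intro i j hi hj h
    simpa [Fin.ext_iff] using h

lemma rado {T : ℕ} (w y : Fin T → ℝ) (hsum : ∑ t, y t = ∑ t, w t)
    (hsub : ∀ S : Finset (Fin T), ∑ t ∈ S, y t ≤ pSum w S.card) :
    y ∈ permSet w := by
  classical
  by_contra hy
  have hKeq : {z | ∃ π : Equiv.Perm (Fin T), z = w ∘ π}
      = Set.range (fun π : Equiv.Perm (Fin T) => w ∘ π) := by
    ext z; simp [Set.mem_range, eq_comm]
  have hKfin : ({z | ∃ π : Equiv.Perm (Fin T), z = w ∘ π} : Set (Fin T → ℝ)).Finite := by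
    rw [hKeq]; exact Set.finite_range _
  obtain ⟨f, u, hfu, huy⟩ := geometric_hahn_banach_closed_point
    (convex_convexHull ℝ _) (hKfin.isClosed_convexHull (𝕜 := ℝ)) hy
  set c : Fin T → ℝ := fun t => f (fun j => if t = j then (1:ℝ) else 0) with hc
  have hf : ∀ z : Fin T → ℝ, f z = ∑ t, z t * c t := by
    intro z
    conv_lhs => rw [pi_eq_sum_univ z]
    rw [map_sum]
    exact Finset.sum_congr rfl (fun t _ => by rw [map_smul]; rfl)
  set σ : Equiv.Perm (Fin T) := Tuple.sort (fun t => -(c t)) with hσ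
  have hmono := Tuple.monotone_sort (fun t => -(c t))
  have hd : ∀ a b : Fin T, a ≤ b → c (σ b) ≤ c (σ a) := by
    intro a b hab
    have := hmono hab
    simp only [Function.comp_apply, neg_le_neg_iff] at this
    linarith [this]
  -- the separating point
  have hzK : (w ∘ ⇑σ.symm) ∈ convexHull ℝ {z | ∃ π : Equiv.Perm (Fin T), z = w ∘ π} :=
    subset_convexHull ℝ _ ⟨σ.symm, rfl⟩
  have hzlt : f (w ∘ ⇑σ.symm) < u := hfu _ hzK
  -- ℕ extensions
  set d : ℕ → ℝ := fun i => if h : i < T then c (σ ⟨i, h⟩) else 0 with hdd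
  set b : ℕ → ℝ := fun i => if h : i < T then y (σ ⟨i, h⟩) else 0 with hbb
  set v : ℕ → ℝ := fun i => if h : i < T then w ⟨i, h⟩ else 0 with hvv
  have hfy : f y = ∑ i ∈ range T, d i * b i := by
    rw [hf y, ← Equiv.sum_comp σ (fun t => y t * c t),
      ← Fin.sum_univ_eq_sum_range (fun i => d i * b i) T]
    refine Finset.sum_congr rfl (fun s _ => ?_)
    simp [hdd, hbb, s.isLt, mul_comm]
  have hfz : f (w ∘ ⇑σ.symm) = ∑ i ∈ range T, d i * v i := by
    rw [hf, ← Equiv.sum_comp σ (fun t => (w ∘ ⇑σ.symm) t * c t),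
      ← Fin.sum_univ_eq_sum_range (fun i => d i * v i) T]
    refine Finset.sum_congr rfl (fun s _ => ?_)
    simp [hdd, hvv, s.isLt, mul_comm]
  -- partial sums
  have hGw : ∀ k, k ≤ T → ∑ j ∈ range k, v j = pSum w k := by
    intro k hk
    unfold pSum
    have h1 : ∑ t : Fin T, (if (t : ℕ) < k then w t else 0)
        = ∑ i ∈ range T, (if i < k then v i else 0) := by
      rw [← Fin.sum_univ_eq_sum_range (fun i => if i < k then v i else 0) T]
      exact Finset.sum_congr rfl (fun t _ => by simp [hvv, t.isLt])
    have h2 : (range T).filter (fun i => i < k) = range k := by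
      ext i; simp only [Finset.mem_filter, Finset.mem_range]; omega
    rw [h1, ← Finset.sum_filter, h2]
  have hGb : ∀ k, k ≤ T → ∑ j ∈ range k, b j ≤ pSum w k := by
    intro k hk
    have h1 : ∑ j ∈ range k, b j
        = ∑ t : Fin T, (if (t : ℕ) < k then y (σ t) else 0) := by
      have e1 : ∑ t : Fin T, (if (t : ℕ) < k then y (σ t) else 0)
          = ∑ i ∈ range T, (if i < k then b i else 0) := by
        rw [← Fin.sum_univ_eq_sum_range (fun i => if i < k then b i else 0) T]
        exact Finset.sum_congr rfl (fun t _ => by simp [hbb, t.isLt])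
      have h2 : (range T).filter (fun i => i < k) = range k := by
        ext i; simp only [Finset.mem_filter, Finset.mem_range]; omega
      rw [e1, ← Finset.sum_filter, h2]
    have h3 : ∑ t : Fin T, (if (t : ℕ) < k then y (σ t) else 0)
        = ∑ t ∈ Finset.univ.filter (fun t : Fin T => (t : ℕ) < k), y (σ t) := by
      rw [Finset.sum_filter]
    have h4 : ∑ t ∈ Finset.univ.filter (fun t : Fin T => (t : ℕ) < k), y (σ t)
        = ∑ t ∈ (Finset.univ.filter (fun t : Fin T => (t : ℕ) < k)).image σ, y t := by
      rw [Finset.sum_image (fun a _ b _ hab => σ.injective hab)]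
    have h5 := hsub ((Finset.univ.filter (fun t : Fin T => (t : ℕ) < k)).image σ)
    rw [Finset.card_image_of_injective _ σ.injective, card_filter_lt hk] at h5
    rw [h1, h3, h4]; exact h5
  have hGbT : ∑ j ∈ range T, b j = ∑ j ∈ range T, v j := by
    rw [hGw T le_rfl]
    have h1 : ∑ j ∈ range T, b j = ∑ t : Fin T, y (σ t) := by
      rw [← Fin.sum_univ_eq_sum_range b T]
      exact Finset.sum_congr rfl (fun t _ => by simp [hbb, t.isLt])
    rw [h1, Equiv.sum_comp σ y, hsum, pSum]
    exact Finset.sum_congr rfl (fun t _ => (if_pos t.isLt).symm)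
  -- summation by parts
  have hpb := Finset.sum_range_by_parts d b T
  have hpv := Finset.sum_range_by_parts d v T
  simp only [smul_eq_mul] at hpb hpv
  have hkey : f y ≤ f (w ∘ ⇑σ.symm) := by
    rw [hfy, hfz, hpb, hpv, hGbT]
    have : ∀ i ∈ range (T - 1),
        (d (i + 1) - d i) * ∑ j ∈ range (i + 1), v j
          ≤ (d (i + 1) - d i) * ∑ j ∈ range (i + 1), b j := by
      intro i hi
      rw [Finset.mem_range] at hi
      have hi1 : i + 1 < T := by omega
      have hi0 : i < T := by omega
      have hdle : d (i + 1) ≤ d i := by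
        have := hd ⟨i, hi0⟩ ⟨i + 1, hi1⟩ (by simp [Fin.le_def])
        simpa [hdd, hi0, hi1] using this
      have hble := hGb (i + 1) (by omega)
      rw [← hGw (i + 1) (by omega)] at hble
      exact mul_le_mul_of_nonpos_left hble (by linarith)
    have hs := Finset.sum_le_sum this
    linarith
  linarith [hzlt, huy, hkey]


open Pointwise in
theorem minkowski_sum_fixedEnergy (T N : ℕ) (m : ℝ) (hm : 0 < m)
    (e : Fin N → ℝ) (he : ∀ i, 0 ≤ e i ∧ e i ≤ m * T) :
    (∑ i : Fin N, {u : Fin T → ℝ | (∀ t, 0 ≤ u t ∧ u t ≤ m) ∧ ∑ t, u t = e i}) =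
      permSet (∑ i, vProf T m (e i)) := by
  classical
  apply Set.Subset.antisymm
  · intro y hy
    rw [Set.mem_fintype_sum] at hy
    obtain ⟨g, hg, hgy⟩ := hy
    have hgb : ∀ i, ∀ t, 0 ≤ g i t ∧ g i t ≤ m := fun i => (hg i).1
    have hgs : ∀ i, ∑ t, g i t = e i := fun i => (hg i).2
    apply rado
    · rw [← hgy]
      have h1 : ∑ t, (∑ i, g i) t = ∑ i, ∑ t, g i t := by
        simp only [Finset.sum_apply]
        exact Finset.sum_comm
      have h2 : ∑ t, (∑ i, vProf T m (e i)) t = ∑ i, ∑ t, vProf T m (e i) t := by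
        simp only [Finset.sum_apply]
        exact Finset.sum_comm
      rw [h1, h2]
      exact Finset.sum_congr rfl
        (fun i _ => by rw [hgs i, sum_vProf hm (he i).1 (he i).2])
    · intro S
      have hcard : S.card ≤ T := by
        have := Finset.card_le_univ S
        simpa using this
      rw [← hgy, pSum_sum]
      have h1 : ∑ t ∈ S, (∑ i, g i) t = ∑ i, ∑ t ∈ S, g i t := by
        simp only [Finset.sum_apply]
        exact Finset.sum_comm
      rw [h1]
      refine Finset.sum_le_sum (fun i _ => ?_)
      rw [pSum_vProf hm (he i).1 (he i).2 hcard]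
      exact subset_le (hgb i) (hgs i) S
  · refine convexHull_min ?_ ?_
    · rintro z ⟨π, rfl⟩
      rw [Set.mem_fintype_sum]
      refine ⟨fun i => vProf T m (e i) ∘ π, fun i => ⟨fun t => vProf_mem hm (he i).1 (π t), ?_⟩, ?_⟩
      · rw [show ∑ t, (vProf T m (e i) ∘ π) t = ∑ t, vProf T m (e i) (π t) from rfl,
          Equiv.sum_comp π (vProf T m (e i))]
        exact sum_vProf hm (he i).1 (he i).2
      · funext t
        simp [Finset.sum_apply]
    · refine convex_sum _ (fun i _ => ?_)
      intro x hx z hz a bb ha hb hab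
      obtain ⟨hxb, hxs⟩ := hx
      obtain ⟨hzb, hzs⟩ := hz
      refine ⟨fun t => ?_, ?_⟩
      · have h1 := (hxb t).1; have h2 := (hxb t).2
        have h3 := (hzb t).1; have h4 := (hzb t).2
        constructor
        · have : (a • x + bb • z) t = a * x t + bb * z t := by
            simp [smul_eq_mul]
          rw [this]; nlinarith
        · have : (a • x + bb • z) t = a * x t + bb * z t := by
            simp [smul_eq_mul]
          rw [this]; nlinarith
      · have : ∑ t, (a • x + bb • z) t = a * ∑ t, x t + bb * ∑ t, z t := by
          simp only [Pi.add_apply, Pi.smul_apply, smul_eq_mul, Finset.sum_add_distrib,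
            Finset.mul_sum]
        rw [this, hxs, hzs, ← add_mul, hab, one_mul]
end
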